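/- Let k ∈ ℕ, m, n ∈ kℕ, r_1,…,r_n, c_1,…,c_m ∈ ℕ₀, and v(i,j) ∈ {0,1} for (i,j) ∈ C(m,n,k). Then there exists a binary matrix ξ on [m]×[n] with row sums r_1,…,r_n, column sums c_1,…,c_m, and Σ_{(p,q)∈B_k(i,j)} ξ_{p,q} ≤ v(i,j) for all (i,j) ∈ C(m,n,k), if and only if there exist η_{i,j} ∈ {0,1}, (i,j) ∈ C(m,n,k), such that Σ_{i∈[m]∩(kℕ₀+1)} η_{i,j} = Σ_{l=0}^{k−1} r_{j+l} for every j ∈ [n]∩(kℕ₀+1), Σ_{j∈[n]∩(kℕ₀+1)} η_{i,j} = Σ_{l=0}^{k−1} c_{i+l} for every i ∈ [m]∩(kℕ₀+1), and η_{i,j} = 0 whenever v(i,j) = 0. -/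

import Mathlib

open scoped Classical

/-- The grid `[m] × [n] = {1,…,m} × {1,…,n}`. -/
def gridIcc (m n : ℕ) : Finset (ℕ × ℕ) := Finset.Icc 1 m ×ˢ Finset.Icc 1 n

/-- The corner points `C(m,n,k) = ([m] × [n]) ∩ (kℕ₀+1)²`. -/
def cornerPts (m n k : ℕ) : Finset (ℕ × ℕ) :=
  (gridIcc m n).filter fun p => p.1 % k = 1 % k ∧ p.2 % k = 1 % k

/-- The block `B_k(i,j) = {(i+a, j+b) : a, b ∈ [k-1]₀}`. -/
def blockF (k i j : ℕ) : Finset (ℕ × ℕ) :=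
  Finset.Icc i (i + k - 1) ×ˢ Finset.Icc j (j + k - 1)

/-- `[m] ∩ (kℕ₀+1)`. -/
def cornerLine (m k : ℕ) : Finset ℕ :=
  (Finset.Icc 1 m).filter fun i => i % k = 1 % k

noncomputable def seg (g : ℕ → ℕ) (k t : ℕ) : ℕ :=
  Nat.find (⟨k, Or.inr le_rfl⟩ : ∃ l, t < ∑ l' ∈ Finset.range (l+1), g l' ∨ k ≤ l)

lemma seg_lt (g : ℕ → ℕ) {k t : ℕ} (hk : 0 < k)
    (h : t < ∑ l' ∈ Finset.range k, g l') : seg g k t < k := by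
  have h1 : k - 1 + 1 = k := by omega
  have : seg g k t ≤ k - 1 := Nat.find_le (by left; rw [h1]; exact h)
  omega

lemma seg_spec (g : ℕ → ℕ) {k t : ℕ} (hk : 0 < k)
    (h : t < ∑ l' ∈ Finset.range k, g l') :
    (∑ l' ∈ Finset.range (seg g k t), g l') ≤ t ∧
      t < ∑ l' ∈ Finset.range (seg g k t + 1), g l' := by
  have hlt := seg_lt g hk h
  have hspec : t < ∑ l' ∈ Finset.range (seg g k t + 1), g l' ∨ k ≤ seg g k t :=
    Nat.find_spec (⟨k, Or.inr le_rfl⟩ :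
      ∃ l, t < ∑ l' ∈ Finset.range (l+1), g l' ∨ k ≤ l)
  have h2 : t < ∑ l' ∈ Finset.range (seg g k t + 1), g l' := by
    rcases hspec with h' | h'
    · exact h'
    · omega
  refine ⟨?_, h2⟩
  rcases Nat.eq_zero_or_pos (seg g k t) with h0 | h0
  · simp [h0]
  · have hmin : ¬(t < ∑ l' ∈ Finset.range (seg g k t - 1 + 1), g l' ∨ k ≤ seg g k t - 1) :=
      Nat.find_min (⟨k, Or.inr le_rfl⟩ :
        ∃ l, t < ∑ l' ∈ Finset.range (l+1), g l' ∨ k ≤ l)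
        (show seg g k t - 1 < seg g k t by omega)
    push_neg at hmin
    have := hmin.1
    rw [show seg g k t - 1 + 1 = seg g k t from by omega] at this
    omega

lemma seg_eq_iff (g : ℕ → ℕ) {k t l : ℕ} (hk : 0 < k) (hl : l < k)
    (h : t < ∑ l' ∈ Finset.range k, g l') :
    seg g k t = l ↔ (∑ l' ∈ Finset.range l, g l') ≤ t ∧
      t < ∑ l' ∈ Finset.range (l+1), g l' := by
  obtain ⟨h1, h2⟩ := seg_spec g hk h
  constructor
  · rintro rfl; exact ⟨h1, h2⟩
  · rintro ⟨h3, h4⟩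
    by_contra hne
    rcases Nat.lt_or_ge (seg g k t) l with hlt | hge
    · have : (∑ l' ∈ Finset.range (seg g k t + 1), g l') ≤ ∑ l' ∈ Finset.range l, g l' :=
        Finset.sum_le_sum_of_subset (Finset.range_subset_range.2 (by omega))
      omega
    · have hgt : l < seg g k t := by omega
      have : (∑ l' ∈ Finset.range (l + 1), g l') ≤ ∑ l' ∈ Finset.range (seg g k t), g l' :=
        Finset.sum_le_sum_of_subset (Finset.range_subset_range.2 (by omega))
      omega

lemma seg_count (g : ℕ → ℕ) {k l : ℕ} (hk : 0 < k) (hl : l < k) :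
    ((Finset.range (∑ l' ∈ Finset.range k, g l')).filter (fun t => seg g k t = l)).card
      = g l := by
  have hsub : (∑ l' ∈ Finset.range (l+1), g l') ≤ ∑ l' ∈ Finset.range k, g l' :=
    Finset.sum_le_sum_of_subset (Finset.range_subset_range.2 (by omega))
  have : (Finset.range (∑ l' ∈ Finset.range k, g l')).filter (fun t => seg g k t = l)
      = Finset.Ico (∑ l' ∈ Finset.range l, g l') (∑ l' ∈ Finset.range (l+1), g l') := by
    ext t
    simp only [Finset.mem_filter, Finset.mem_range, Finset.mem_Ico]
    constructor
    · rintro ⟨ht, hs⟩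
      exact (seg_eq_iff g hk hl ht).1 hs
    · rintro ⟨h1, h2⟩
      have ht : t < ∑ l' ∈ Finset.range k, g l' := by omega
      exact ⟨ht, (seg_eq_iff g hk hl ht).2 ⟨h1, h2⟩⟩
  rw [this, Nat.card_Ico, Finset.sum_range_succ]
  omega

lemma rank_lt_card {s : Finset ℕ} {i : ℕ} (hi : i ∈ s) :
    (s.filter (· < i)).card < s.card := by
  apply Finset.card_lt_card
  refine ⟨Finset.filter_subset _ _, fun hsub => ?_⟩
  have := hsub hi
  simp at this

lemma rank_count (s : Finset ℕ) (P : ℕ → Prop) [DecidablePred P] :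
    (s.filter (fun i => P ((s.filter (· < i)).card))).card
      = ((Finset.range s.card).filter P).card := by
  induction s using Finset.induction_on_max with
  | empty => simp
  | insert a s ha ih =>
    have hans : a ∉ s := fun h => lt_irrefl a (ha a h)
    have hcard : (insert a s).card = s.card + 1 := Finset.card_insert_of_notMem hans
    have hrank : ∀ i ∈ s, ((insert a s).filter (· < i)).card = (s.filter (· < i)).card := by
      intro i hi
      congr 1
      rw [Finset.filter_insert, if_neg (by exact fun h => absurd h (not_lt.2 (ha i hi).le))]
    have hs : (s.filter (fun i => P (((insert a s).filter (· < i)).card))).card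
        = ((Finset.range s.card).filter P).card := by
      rw [Finset.filter_congr (fun i hi => by rw [hrank i hi]), ih]
    rw [Finset.filter_insert, Finset.filter_insert, if_neg (lt_irrefl a),
      Finset.filter_true_of_mem ha, hcard, Finset.range_add_one, Finset.filter_insert]
    by_cases hP : P s.card
    · rw [if_pos hP, if_pos hP,
        Finset.card_insert_of_notMem (fun h => hans (Finset.mem_of_mem_filter a h)),
        Finset.card_insert_of_notMem (by simp), hs]
    · rw [if_neg hP, if_neg hP, hs]


def cnr (k p : ℕ) : ℕ := k * ((p - 1) / k) + 1

lemma cnr_mod (k p : ℕ) : cnr k p % k = 1 % k := by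
  simp [cnr, Nat.mul_add_mod]

lemma cnr_le {k p : ℕ} (hp : 1 ≤ p) : cnr k p ≤ p := by
  have := Nat.div_mul_le_self (p - 1) k
  have : k * ((p - 1) / k) ≤ p - 1 := by
    rw [mul_comm]; exact this
  simp [cnr]; omega

lemma le_cnr {k p : ℕ} (hk : 0 < k) : p ≤ cnr k p + k - 1 := by
  have h := Nat.div_add_mod (p - 1) k
  have h2 : (p - 1) % k < k := Nat.mod_lt _ hk
  simp [cnr]; omega

lemma corner_sub {k i : ℕ} (hk : 0 < k) (hi1 : 1 ≤ i) (hmod : i % k = 1 % k) :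
    k ∣ (i - 1) := by
  rcases Nat.eq_or_lt_of_le hk with h1 | h1
  · subst h1; exact ⟨i - 1, by omega⟩
  · have : i % k = 1 := by rwa [Nat.mod_eq_of_lt h1] at hmod
    have := Nat.div_add_mod i k
    exact ⟨i / k, by omega⟩

lemma corner_add_le {k m i : ℕ} (hk : 0 < k) (hm : k ∣ m)
    (hi1 : 1 ≤ i) (him : i ≤ m) (hmod : i % k = 1 % k) : i + k - 1 ≤ m := by
  obtain ⟨t, ht⟩ := corner_sub hk hi1 hmod
  have hdvd : k ∣ (m - (i - 1)) := Nat.dvd_sub hm ⟨t, ht⟩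
  have hpos : 0 < m - (i - 1) := by omega
  have := Nat.le_of_dvd hpos hdvd
  omega

lemma cnr_eq {k i p : ℕ} (hk : 0 < k) (hi1 : 1 ≤ i) (hmod : i % k = 1 % k)
    (h1 : i ≤ p) (h2 : p ≤ i + k - 1) : cnr k p = i := by
  obtain ⟨t, ht⟩ := corner_sub hk hi1 hmod
  have hp1 : p - 1 = k * t + (p - i) := by omega
  have hlt : p - i < k := by omega
  have : (p - 1) / k = t := by
    rw [hp1, Nat.mul_add_div hk, Nat.div_eq_of_lt hlt]; omega
  simp [cnr, this]; omega

lemma mem_cornerLine_iff {m k i : ℕ} :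
    i ∈ cornerLine m k ↔ 1 ≤ i ∧ i ≤ m ∧ i % k = 1 % k := by
  simp [cornerLine, and_assoc]

lemma cnr_mem_cornerLine {k m p : ℕ} (hk : 0 < k) (hp1 : 1 ≤ p) (hpm : p ≤ m) :
    cnr k p ∈ cornerLine m k := by
  rw [mem_cornerLine_iff]
  refine ⟨by simp [cnr], le_trans (cnr_le hp1) hpm, cnr_mod k p⟩

lemma sum1d {M : Type*} [AddCommMonoid M] {k m : ℕ} (hk : 0 < k) (hm : k ∣ m)
    (f : ℕ → M) :
    ∑ p ∈ Finset.Icc 1 m, f p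
      = ∑ i ∈ cornerLine m k, ∑ a ∈ Finset.range k, f (i + a) := by
  rw [← Finset.sum_product']
  apply Finset.sum_nbij' (fun p => (cnr k p, p - cnr k p)) (fun w => w.1 + w.2)
  · intro p hp
    simp only [Finset.mem_Icc] at hp
    simp only [Finset.mem_product, Finset.mem_range]
    refine ⟨cnr_mem_cornerLine hk hp.1 hp.2, ?_⟩
    have := le_cnr (p := p) hk
    have := cnr_le (k := k) hp.1
    omega
  · intro w hw
    simp only [Finset.mem_product, Finset.mem_range, mem_cornerLine_iff] at hw
    obtain ⟨⟨h1, h2, h3⟩, h4⟩ := hw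
    have := corner_add_le hk hm h1 h2 h3
    simp only [Finset.mem_Icc]
    omega
  · intro p hp
    simp only [Finset.mem_Icc] at hp
    have := cnr_le (k := k) hp.1
    simp; omega
  · intro w hw
    simp only [Finset.mem_product, Finset.mem_range, mem_cornerLine_iff] at hw
    obtain ⟨⟨h1, h2, h3⟩, h4⟩ := hw
    have := cnr_eq (p := w.1 + w.2) hk h1 h3 (Nat.le_add_right _ _) (by omega)
    ext <;> simp [this]
  · intro p hp
    simp only [Finset.mem_Icc] at hp
    have := cnr_le (k := k) hp.1
    congr 1
    omega

lemma cnr_eq' {k i a : ℕ} {m : ℕ} (hk : 0 < k) (hi : i ∈ cornerLine m k) (ha : a < k) :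
    cnr k (i + a) = i := by
  rw [mem_cornerLine_iff] at hi
  exact cnr_eq (p := i + a) hk hi.1 hi.2.2 (Nat.le_add_right _ _) (by omega)

lemma sum_Icc_off {M : Type*} [AddCommMonoid M] {k : ℕ} (hk : 0 < k) (f : ℕ → M) (i : ℕ) :
    ∑ p ∈ Finset.Icc i (i + k - 1), f p = ∑ a ∈ Finset.range k, f (i + a) := by
  rw [show (i + k - 1) = (i + k - 1 + 1) - 1 from by omega]
  rw [show i + k - 1 + 1 = i + k from by omega]
  rw [show (i + k) - 1 = i + k - 1 from rfl]
  rw [← Finset.Ico_add_one_right_eq_Icc, show i + k - 1 + 1 = i + k from by omega,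
    Finset.sum_Ico_eq_sum_range, show i + k - i = k from by omega]

lemma block_sum {M : Type*} [AddCommMonoid M] {k : ℕ} (hk : 0 < k) (f : ℕ × ℕ → M)
    (i j : ℕ) :
    ∑ z ∈ blockF k i j, f z
      = ∑ a ∈ Finset.range k, ∑ b ∈ Finset.range k, f (i + a, j + b) := by
  rw [blockF, Finset.sum_product]
  rw [sum_Icc_off hk (fun p => ∑ q ∈ Finset.Icc j (j + k - 1), f (p, q)) i]
  exact Finset.sum_congr rfl fun a _ => sum_Icc_off hk _ j

lemma mem_cornerPts_iff {m n k : ℕ} {w : ℕ × ℕ} :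
    w ∈ cornerPts m n k ↔ w.1 ∈ cornerLine m k ∧ w.2 ∈ cornerLine n k := by
  simp only [cornerPts, gridIcc, cornerLine, Finset.mem_filter, Finset.mem_product]
  tauto

lemma double_ite {k A B : ℕ} (hA : A < k) (hB : B < k) :
    ∑ a ∈ Finset.range k, ∑ b ∈ Finset.range k,
      (if a = A ∧ b = B then 1 else 0 : ℕ) = 1 := by
  have h1 : ∀ a ∈ Finset.range k, ∑ b ∈ Finset.range k,
      (if a = A ∧ b = B then 1 else 0 : ℕ) = if a = A then 1 else 0 := by
    intro a _
    by_cases h : a = A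
    · simp only [h, true_and]
      rw [Finset.sum_ite_eq' (Finset.range k) B (fun _ => (1:ℕ))]
      simp [hB]
    · simp [h]
  rw [Finset.sum_congr rfl h1, Finset.sum_ite_eq' (Finset.range k) A (fun _ => (1:ℕ))]
  simp [hA]

/-- existence of a binary matrix with given row/column sums and block constraints
`Σ_{B_k(i,j)} ξ ≤ v(i,j)` (with `v(i,j) ∈ {0,1}`) is equivalent to the feasibility of the
aggregated system (3.2) for the block indicators `η`. -/
theorem stmt2 (k m n : ℕ) (hk : 0 < k)
    (hm : k ∣ m) (hm0 : 0 < m) (hn : k ∣ n) (hn0 : 0 < n)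
    (r c : ℕ → ℕ) (v : ℕ × ℕ → ℕ) (hv : ∀ p ∈ cornerPts m n k, v p = 0 ∨ v p = 1) :
    (∃ ξ : ℕ × ℕ → ℕ,
      (∀ p ∈ gridIcc m n, ξ p ≤ 1) ∧
      (∀ q ∈ Finset.Icc 1 n, ∑ p ∈ Finset.Icc 1 m, ξ (p, q) = r q) ∧
      (∀ p ∈ Finset.Icc 1 m, ∑ q ∈ Finset.Icc 1 n, ξ (p, q) = c p) ∧
      (∀ w ∈ cornerPts m n k, ∑ z ∈ blockF k w.1 w.2, ξ z ≤ v w))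
    ↔ (∃ η : ℕ × ℕ → ℕ,
      (∀ w ∈ cornerPts m n k, η w ≤ 1) ∧
      (∀ j ∈ cornerLine n k,
        ∑ i ∈ cornerLine m k, η (i, j) = ∑ l ∈ Finset.range k, r (j + l)) ∧
      (∀ i ∈ cornerLine m k,
        ∑ j ∈ cornerLine n k, η (i, j) = ∑ l ∈ Finset.range k, c (i + l)) ∧
      (∀ w ∈ cornerPts m n k, v w = 0 → η w = 0)) := by
  constructor
  · rintro ⟨ξ, hbnd, hr, hc, hblk⟩
    refine ⟨fun w => ∑ z ∈ blockF k w.1 w.2, ξ z, ?_, ?_, ?_, ?_⟩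
    · intro w hw
      dsimp only
      rcases hv w hw with h | h <;> have := hblk w hw <;> omega
    · intro j hj
      have hj' := mem_cornerLine_iff.1 hj
      have hjn : j + k - 1 ≤ n := corner_add_le hk hn hj'.1 hj'.2.1 hj'.2.2
      calc ∑ i ∈ cornerLine m k, ∑ z ∈ blockF k i j, ξ z
          = ∑ i ∈ cornerLine m k, ∑ a ∈ Finset.range k, ∑ b ∈ Finset.range k,
              ξ (i + a, j + b) :=
            Finset.sum_congr rfl fun i _ => block_sum hk ξ i j
        _ = ∑ i ∈ cornerLine m k, ∑ b ∈ Finset.range k, ∑ a ∈ Finset.range k,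
              ξ (i + a, j + b) :=
            Finset.sum_congr rfl fun i _ => Finset.sum_comm
        _ = ∑ b ∈ Finset.range k, ∑ i ∈ cornerLine m k, ∑ a ∈ Finset.range k,
              ξ (i + a, j + b) := Finset.sum_comm
        _ = ∑ b ∈ Finset.range k, ∑ p ∈ Finset.Icc 1 m, ξ (p, j + b) :=
            Finset.sum_congr rfl fun b _ => (sum1d hk hm fun p => ξ (p, j + b)).symm
        _ = ∑ b ∈ Finset.range k, r (j + b) := by
            refine Finset.sum_congr rfl fun b hb => hr (j + b) ?_
            simp only [Finset.mem_range] at hb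
            simp only [Finset.mem_Icc]
            omega
    · intro i hi
      have hi' := mem_cornerLine_iff.1 hi
      have him : i + k - 1 ≤ m := corner_add_le hk hm hi'.1 hi'.2.1 hi'.2.2
      calc ∑ j ∈ cornerLine n k, ∑ z ∈ blockF k i j, ξ z
          = ∑ j ∈ cornerLine n k, ∑ a ∈ Finset.range k, ∑ b ∈ Finset.range k,
              ξ (i + a, j + b) :=
            Finset.sum_congr rfl fun j _ => block_sum hk ξ i j
        _ = ∑ a ∈ Finset.range k, ∑ j ∈ cornerLine n k, ∑ b ∈ Finset.range k,
              ξ (i + a, j + b) := Finset.sum_comm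
        _ = ∑ a ∈ Finset.range k, ∑ q ∈ Finset.Icc 1 n, ξ (i + a, q) :=
            Finset.sum_congr rfl fun a _ => (sum1d hk hn fun q => ξ (i + a, q)).symm
        _ = ∑ a ∈ Finset.range k, c (i + a) := by
            refine Finset.sum_congr rfl fun a ha => hc (i + a) ?_
            simp only [Finset.mem_range] at ha
            simp only [Finset.mem_Icc]
            omega
    · intro w hw hv0
      dsimp only
      have := hblk w hw
      omega
  · rintro ⟨η, hbnd, hr, hc, hz⟩
    classical
    set sr : ℕ → Finset ℕ :=
      fun j => (cornerLine m k).filter (fun i => η (i, j) = 1) with hsrdef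
    set sc : ℕ → Finset ℕ :=
      fun i => (cornerLine n k).filter (fun j => η (i, j) = 1) with hscdef
    set boff : ℕ → ℕ → ℕ :=
      fun i j => seg (fun l => r (j + l)) k (((sr j).filter (· < i)).card) with hboffdef
    set aoff : ℕ → ℕ → ℕ :=
      fun i j => seg (fun l => c (i + l)) k (((sc i).filter (· < j)).card) with haoffdef
    have card_sr : ∀ j ∈ cornerLine n k, (sr j).card = ∑ l ∈ Finset.range k, r (j + l) := by
      intro j hj
      rw [show sr j = (cornerLine m k).filter (fun i => η (i, j) = 1) from rfl,
        Finset.card_filter, ← hr j hj]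
      refine Finset.sum_congr rfl fun i hi => ?_
      have := hbnd _ ((mem_cornerPts_iff (w := (i, j))).2 ⟨hi, hj⟩)
      split <;> omega
    have card_sc : ∀ i ∈ cornerLine m k, (sc i).card = ∑ l ∈ Finset.range k, c (i + l) := by
      intro i hi
      rw [show sc i = (cornerLine n k).filter (fun j => η (i, j) = 1) from rfl,
        Finset.card_filter, ← hc i hi]
      refine Finset.sum_congr rfl fun j hj => ?_
      have := hbnd _ ((mem_cornerPts_iff (w := (i, j))).2 ⟨hi, hj⟩)
      split <;> omega
    have boff_lt : ∀ i ∈ cornerLine m k, ∀ j ∈ cornerLine n k, η (i, j) = 1 →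
        boff i j < k := by
      intro i hi j hj h1
      have hmem : i ∈ sr j := Finset.mem_filter.2 ⟨hi, h1⟩
      have := rank_lt_card hmem
      rw [card_sr j hj] at this
      exact seg_lt _ hk this
    have aoff_lt : ∀ i ∈ cornerLine m k, ∀ j ∈ cornerLine n k, η (i, j) = 1 →
        aoff i j < k := by
      intro i hi j hj h1
      have hmem : j ∈ sc i := Finset.mem_filter.2 ⟨hj, h1⟩
      have := rank_lt_card hmem
      rw [card_sc i hi] at this
      exact seg_lt _ hk this
    set xi : ℕ × ℕ → ℕ := fun z =>
      if η (cnr k z.1, cnr k z.2) = 1 ∧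
          z.1 = cnr k z.1 + aoff (cnr k z.1) (cnr k z.2) ∧
          z.2 = cnr k z.2 + boff (cnr k z.1) (cnr k z.2) then 1 else 0 with hxidef
    have hxi : ∀ p q : ℕ, xi (p, q) =
        if η (cnr k p, cnr k q) = 1 ∧
            p = cnr k p + aoff (cnr k p) (cnr k q) ∧
            q = cnr k q + boff (cnr k p) (cnr k q) then 1 else 0 := by
      intro p q; rw [hxidef]
    refine ⟨xi, ?_, ?_, ?_, ?_⟩
    · intro p _
      rw [hxidef]
      dsimp only
      split <;> omega
    · -- row sums
      intro q hq
      simp only [Finset.mem_Icc] at hq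
      have hjc : cnr k q ∈ cornerLine n k := cnr_mem_cornerLine hk hq.1 hq.2
      set j := cnr k q with hjdef
      have hb0 : q - j < k := by
        have := le_cnr (k := k) (p := q) hk
        have := cnr_le (k := k) (p := q) hq.1
        omega
      have hqeq : q = j + (q - j) := by
        have := cnr_le (k := k) (p := q) hq.1
        omega
      rw [sum1d hk hm (fun p => xi (p, q))]
      have hinner : ∀ i ∈ cornerLine m k,
          (∑ a ∈ Finset.range k, xi (i + a, q))
            = if η (i, j) = 1 ∧ boff i j = q - j then 1 else 0 := by
        intro i hi
        rw [Finset.sum_congr rfl (fun a ha => by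
          rw [hxi, cnr_eq' hk hi (Finset.mem_range.1 ha), ← hjdef])]
        by_cases h1 : η (i, j) = 1
        · by_cases h2 : boff i j = q - j
          · have hak : aoff i j < k := aoff_lt i hi j hjc h1
            have hq2 : q = j + boff i j := by omega
            rw [if_pos ⟨h1, h2⟩]
            rw [Finset.sum_congr rfl (fun a (_ : a ∈ Finset.range k) =>
              show (if η (i, j) = 1 ∧ i + a = i + aoff i j ∧ q = j + boff i j
                  then 1 else 0 : ℕ) = if a = aoff i j then 1 else 0 from by
                by_cases h3 : a = aoff i j
                · rw [if_pos ⟨h1, by rw [h3], hq2⟩, if_pos h3]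
                · rw [if_neg (by rintro ⟨-, h4, -⟩; exact h3 (by omega)), if_neg h3])]
            rw [Finset.sum_ite_eq' (Finset.range k) (aoff i j) (fun _ => (1:ℕ))]
            simp [hak]
          · rw [if_neg (by rintro ⟨-, h⟩; exact h2 h)]
            refine Finset.sum_eq_zero fun a _ => ?_
            rw [if_neg (by rintro ⟨-, -, h4⟩; exact h2 (by omega))]
        · rw [if_neg (by rintro ⟨h, -⟩; exact h1 h)]
          refine Finset.sum_eq_zero fun a _ => ?_
          rw [if_neg (by rintro ⟨h, -⟩; exact h1 h)]
      rw [Finset.sum_congr rfl hinner]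
      have hcount : ((sr j).filter (fun i => boff i j = q - j)).card
          = ∑ i ∈ cornerLine m k,
              (if η (i, j) = 1 ∧ boff i j = q - j then 1 else 0 : ℕ) := by
        rw [show sr j = (cornerLine m k).filter (fun i => η (i, j) = 1) from rfl,
          Finset.filter_filter, Finset.card_filter]
      rw [← hcount]
      simp only [hboffdef]
      rw [rank_count (sr j) (fun t => seg (fun l => r (j + l)) k t = q - j)]
      rw [card_sr j hjc, seg_count (fun l => r (j + l)) hk hb0, ← hqeq]
    · -- column sums
      intro p hp
      simp only [Finset.mem_Icc] at hp
      have hic : cnr k p ∈ cornerLine m k := cnr_mem_cornerLine hk hp.1 hp.2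
      set i := cnr k p with hidef
      have ha0 : p - i < k := by
        have := le_cnr (k := k) (p := p) hk
        have := cnr_le (k := k) (p := p) hp.1
        omega
      have hpeq : p = i + (p - i) := by
        have := cnr_le (k := k) (p := p) hp.1
        omega
      rw [sum1d hk hn (fun q => xi (p, q))]
      have hinner : ∀ j ∈ cornerLine n k,
          (∑ b ∈ Finset.range k, xi (p, j + b))
            = if η (i, j) = 1 ∧ aoff i j = p - i then 1 else 0 := by
        intro j hj
        rw [Finset.sum_congr rfl (fun b hb => by
          rw [hxi, cnr_eq' hk hj (Finset.mem_range.1 hb), ← hidef])]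
        by_cases h1 : η (i, j) = 1
        · by_cases h2 : aoff i j = p - i
          · have hbk : boff i j < k := boff_lt i hic j hj h1
            have hp2 : p = i + aoff i j := by omega
            rw [if_pos ⟨h1, h2⟩]
            rw [Finset.sum_congr rfl (fun b (_ : b ∈ Finset.range k) =>
              show (if η (i, j) = 1 ∧ p = i + aoff i j ∧ j + b = j + boff i j
                  then 1 else 0 : ℕ) = if b = boff i j then 1 else 0 from by
                by_cases h3 : b = boff i j
                · rw [if_pos ⟨h1, hp2, by rw [h3]⟩, if_pos h3]
                · rw [if_neg (by rintro ⟨-, -, h4⟩; exact h3 (by omega)), if_neg h3])]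
            rw [Finset.sum_ite_eq' (Finset.range k) (boff i j) (fun _ => (1:ℕ))]
            simp [hbk]
          · rw [if_neg (by rintro ⟨-, h⟩; exact h2 h)]
            refine Finset.sum_eq_zero fun b _ => ?_
            rw [if_neg (by rintro ⟨-, h4, -⟩; exact h2 (by omega))]
        · rw [if_neg (by rintro ⟨h, -⟩; exact h1 h)]
          refine Finset.sum_eq_zero fun b _ => ?_
          rw [if_neg (by rintro ⟨h, -⟩; exact h1 h)]
      rw [Finset.sum_congr rfl hinner]
      have hcount : ((sc i).filter (fun j => aoff i j = p - i)).card
          = ∑ j ∈ cornerLine n k,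
              (if η (i, j) = 1 ∧ aoff i j = p - i then 1 else 0 : ℕ) := by
        rw [show sc i = (cornerLine n k).filter (fun j => η (i, j) = 1) from rfl,
          Finset.filter_filter, Finset.card_filter]
      rw [← hcount]
      simp only [haoffdef]
      rw [rank_count (sc i) (fun t => seg (fun l => c (i + l)) k t = p - i)]
      rw [card_sc i hic, seg_count (fun l => c (i + l)) hk ha0, ← hpeq]
    · -- block constraints
      rintro ⟨i, j⟩ hw
      obtain ⟨hi, hj⟩ := mem_cornerPts_iff.1 hw
      rw [block_sum hk xi i j]
      rw [Finset.sum_congr rfl (fun a ha => Finset.sum_congr rfl (fun b hb => by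
        rw [hxi, cnr_eq' hk hi (Finset.mem_range.1 ha),
          cnr_eq' hk hj (Finset.mem_range.1 hb)]))]
      by_cases h1 : η (i, j) = 1
      · have hva : v (i, j) = 1 := by
          rcases hv _ hw with h | h
          · exact absurd h1 (by rw [hz _ hw h]; omega)
          · exact h
        rw [Finset.sum_congr rfl (fun a (_ : a ∈ Finset.range k) =>
          Finset.sum_congr rfl (fun b (_ : b ∈ Finset.range k) =>
            show (if η (i, j) = 1 ∧ i + a = i + aoff i j ∧ j + b = j + boff i j
                then 1 else 0 : ℕ)
              = if a = aoff i j ∧ b = boff i j then 1 else 0 from by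
              by_cases h3 : a = aoff i j ∧ b = boff i j
              · rw [if_pos ⟨h1, by rw [h3.1], by rw [h3.2]⟩, if_pos h3]
              · rw [if_neg (fun hc' => h3 ⟨by omega, by omega⟩), if_neg h3]))]
        rw [double_ite (aoff_lt i hi j hj h1) (boff_lt i hi j hj h1), hva]
      · have : ∀ a ∈ Finset.range k, ∀ b ∈ Finset.range k,
            (if η (i, j) = 1 ∧ i + a = i + aoff i j ∧ j + b = j + boff i j
              then 1 else 0 : ℕ) = 0 := by
          intro a _ b _
          rw [if_neg (by rintro ⟨h, -⟩; exact h1 h)]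
        rw [Finset.sum_congr rfl (fun a ha =>
          Finset.sum_eq_zero (fun b hb => this a ha b hb))]
        simp
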